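/- Let μ > 0 and let u : ℝ → ℝ be twice differentiable with u''(t) = −u(t)·(u(t)² − μ), u(0) = A + √μ with A ≥ 0, and u'(0) = 0. If A = (√2 − 1)·√μ exactly (the boundary value A' = 1), then the conserved energy equals 0 and u(t)² ≤ 2μ for all t ∈ ℝ; moreover at any time t with u(t) = 0 one also has u'(t) = 0. -/
import Mathlib


/-- The boundary case `A' = 1`: if `μ > 0`, `A = (√2 − 1)·√μ`, and
`u'' = −u(u² − μ)` with `u(0) = A + √μ`, `u'(0) = 0`, then the conserved energy
vanishes identically, `u(t)² ≤ 2μ` for all `t`, and at any time where `u`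
vanishes its derivative vanishes as well. -/
theorem stmt_17 (μ A : ℝ) (hμ : 0 < μ) (hA : 0 ≤ A)
    (hAeq : A = (Real.sqrt 2 - 1) * Real.sqrt μ) (u : ℝ → ℝ)
    (hu : Differentiable ℝ u) (hu' : Differentiable ℝ (deriv u))
    (hode : ∀ t : ℝ, deriv (deriv u) t = -u t * (u t ^ 2 - μ))
    (h0 : u 0 = A + Real.sqrt μ) (h0' : deriv u 0 = 0) :
    (∀ t : ℝ,
      (1 / 2) * (deriv u t) ^ 2 + (1 / 4) * (u t) ^ 4 - (μ / 2) * (u t) ^ 2 = 0) ∧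
    (∀ t : ℝ, (u t) ^ 2 ≤ 2 * μ) ∧
    (∀ t : ℝ, u t = 0 → deriv u t = 0) := by
  set E : ℝ → ℝ := fun t =>
    (1 / 2) * (deriv u t) ^ 2 + (1 / 4) * (u t) ^ 4 - (μ / 2) * (u t) ^ 2 with hE
  have hEderiv : ∀ t : ℝ, HasDerivAt E 0 t := by
    intro t
    have h1 : HasDerivAt u (deriv u t) t := (hu t).hasDerivAt
    have h2 : HasDerivAt (deriv u) (deriv (deriv u) t) t := (hu' t).hasDerivAt
    have h3 : HasDerivAt E
        ((1/2) * (2 * deriv u t ^ 1 * deriv (deriv u) t)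
          + (1/4) * (4 * u t ^ 3 * deriv u t)
          - (μ/2) * (2 * u t ^ 1 * deriv u t)) t := by
      exact (((h2.pow 2).const_mul (1/2)).add ((h1.pow 4).const_mul (1/4))).sub
        ((h1.pow 2).const_mul (μ/2))
    convert h3 using 1
    rw [hode t]; ring
  have hEconst : ∀ t : ℝ, E t = E 0 := by
    intro t
    have hdiff : Differentiable ℝ E := fun t => (hEderiv t).differentiableAt
    exact is_const_of_deriv_eq_zero hdiff (fun t => (hEderiv t).deriv) t 0
  have hu0 : u 0 = Real.sqrt 2 * Real.sqrt μ := by rw [h0, hAeq]; ring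
  have hu0sq : (u 0) ^ 2 = 2 * μ := by
    rw [hu0, mul_pow, Real.sq_sqrt (by norm_num : (2:ℝ) ≥ 0),
      Real.sq_sqrt hμ.le]
  have hE0 : E 0 = 0 := by
    have : (u 0) ^ 4 = ((u 0) ^ 2) ^ 2 := by ring
    simp only [hE, h0', this, hu0sq]; ring
  have hEzero : ∀ t : ℝ, E t = 0 := fun t => (hEconst t).trans hE0
  refine ⟨hEzero, ?_, ?_⟩
  · intro t
    have h := hEzero t
    simp only [hE] at h
    nlinarith [sq_nonneg (deriv u t), sq_nonneg (u t), sq_nonneg (u t ^ 2 - 2*μ),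
      sq_nonneg (u t ^ 2)]
  · intro t ht
    have h := hEzero t
    simp only [hE, ht] at h
    nlinarith [sq_nonneg (deriv u t)]
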